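/- The sequence 16^(5^k) converges in ℤ_10 as k → ∞, and its limit e is a nontrivial idempotent of ℤ_10; similarly 5^(2^k) converges to the idempotent 1 − e. -/

import Mathlib

/-- The inverse limit `lim← ℤ/n^iℤ`, realized as the subring of compatible
sequences in `Π i, ZMod (n^i)`. -/
def adicSubring (n : ℕ) : Subring (∀ i : ℕ, ZMod (n ^ i)) where
  carrier := { f | ∀ i, ZMod.castHom (pow_dvd_pow n (Nat.le_succ i)) (ZMod (n ^ i)) (f (i + 1)) = f i }
  zero_mem' := by intro i; rw [Pi.zero_apply, map_zero]; rfl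
  one_mem' := by intro i; rw [Pi.one_apply, map_one]; rfl
  add_mem' := by intro a b ha hb i; simp [Pi.add_apply, map_add, ha i, hb i]
  mul_mem' := by intro a b ha hb i; simp [Pi.mul_apply, map_mul, ha i, hb i]
  neg_mem' := by intro a ha i; simp [Pi.neg_apply, map_neg, ha i]

/-- The ring of `n`-adic integers `ℤ_n := lim← ℤ/n^iℤ`. -/
abbrev AdicInt (n : ℕ) : Type := adicSubring n

open Filter

instance (m : ℕ) : TopologicalSpace (ZMod m) := ⊥

lemma step5 (a : ℤ) (m : ℕ) (h1 : (5:ℤ) ∣ a - 1) (h2 : (5:ℤ)^(m+1) ∣ a - 1) :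
    (5:ℤ)^(m+2) ∣ a^5 - 1 := by
  have key : a^5 - 1 = (a - 1) * (a^4 + a^3 + a^2 + a + 1) := by ring
  have h5 : (5:ℤ) ∣ a^4 + a^3 + a^2 + a + 1 := by
    have h : a^4 + a^3 + a^2 + a + 1 = 5 + (a-1) * (a^3 + 2*a^2 + 3*a + 4) := by ring
    rw [h]; exact dvd_add ⟨1, by ring⟩ (h1.mul_right _)
  rw [key, pow_succ]
  exact mul_dvd_mul h2 h5

lemma L1 (k : ℕ) : (5:ℤ)^(k+1) ∣ 16^(5^k) - 1 := by
  induction k with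
  | zero => norm_num
  | succ k ih =>
    have h1 : (5:ℤ) ∣ 16^(5^k) - 1 := dvd_trans (dvd_pow_self 5 (Nat.succ_ne_zero k)) ih
    rw [pow_succ 5 k, pow_mul]
    exact step5 _ k h1 ih

lemma L1' (k m : ℕ) : (5:ℤ)^(k+1) ∣ 16^(5^k * m) - 1 := by
  have h : (16:ℤ)^(5^k) - 1 ∣ ((16:ℤ)^(5^k))^m - 1^m := sub_dvd_pow_sub_pow _ _ m
  rw [one_pow, ← pow_mul] at h
  exact (L1 k).trans h

lemma L2 (i k : ℕ) (h : i ≤ k) : (2:ℤ)^i ∣ 16^(5^k) := by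
  have he : (16:ℤ)^(5^k) = 2^(4 * 5^k) := by rw [pow_mul]; norm_num
  rw [he]
  refine pow_dvd_pow 2 (h.trans ?_)
  have := Nat.lt_pow_self (n := k) (by norm_num : 1 < 5)
  omega

lemma M2 (k : ℕ) : (2:ℤ)^(k+2) ∣ 5^(2^k) - 1 := by
  induction k with
  | zero => norm_num
  | succ k ih =>
    have hodd : Odd ((5:ℤ)^(2^k)) := Odd.pow ⟨2, by norm_num⟩
    obtain ⟨c, hc⟩ := hodd
    have h2 : (2:ℤ) ∣ 5^(2^k) + 1 := ⟨c+1, by omega⟩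
    have key : (5:ℤ)^(2^(k+1)) - 1 = (5^(2^k) - 1) * (5^(2^k) + 1) := by
      rw [pow_succ 2 k, pow_mul]; ring
    rw [key, pow_succ]
    exact mul_dvd_mul ih h2

lemma D1 (i k : ℕ) (h : i ≤ k) : (10:ℤ)^i ∣ 16^(5^k) - 16^(5^i) := by
  obtain ⟨m, hm⟩ : ∃ m, 5^(k-i) = m + 1 :=
    ⟨5^(k-i) - 1, by have := Nat.one_le_pow (k-i) 5 (by norm_num); omega⟩
  have hexp : 5^k = 5^i + 5^i * m := by
    rw [show (5:ℕ)^k = 5^i * 5^(k-i) by rw [← pow_add, Nat.add_sub_cancel' h], hm]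
    ring
  have h5 : (5:ℤ)^i ∣ 16^(5^i * m) - 1 :=
    (pow_dvd_pow 5 (Nat.le_succ i)).trans (L1' i m)
  have h2 : (2:ℤ)^i ∣ 16^(5^i) := L2 i i le_rfl
  have key : (16:ℤ)^(5^k) - 16^(5^i) = 16^(5^i) * (16^(5^i * m) - 1) := by
    rw [mul_sub, mul_one, ← pow_add, ← hexp]
  rw [key, show (10:ℤ)^i = 2^i * 5^i by rw [← mul_pow]; norm_num]
  exact mul_dvd_mul h2 h5

lemma Didem (i : ℕ) : (10:ℤ)^i ∣ 16^(5^i) * 16^(5^i) - 16^(5^i) := by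
  have h5 : (5:ℤ)^i ∣ 16^(5^i) - 1 := (pow_dvd_pow 5 (Nat.le_succ i)).trans (L1 i)
  have h2 : (2:ℤ)^i ∣ 16^(5^i) := L2 i i le_rfl
  have key : (16:ℤ)^(5^i) * 16^(5^i) - 16^(5^i) = 16^(5^i) * (16^(5^i) - 1) := by ring
  rw [key, show (10:ℤ)^i = 2^i * 5^i by rw [← mul_pow]; norm_num]
  exact mul_dvd_mul h2 h5

lemma D2 (i k : ℕ) (h : i ≤ k) : (10:ℤ)^i ∣ 5^(2^k) - (1 - 16^(5^i)) := by
  have hcop : IsCoprime ((2:ℤ)^i) ((5:ℤ)^i) :=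
    (Int.isCoprime_iff_gcd_eq_one.mpr (by decide)).pow
  have h2 : (2:ℤ)^i ∣ 5^(2^k) - 1 + 16^(5^i) := by
    refine dvd_add ((pow_dvd_pow 2 ?_).trans (M2 k)) (L2 i i le_rfl)
    omega
  have h5 : (5:ℤ)^i ∣ 5^(2^k) - 1 + 16^(5^i) := by
    have ha : (5:ℤ)^i ∣ 5^(2^k) := by
      refine pow_dvd_pow 5 (h.trans ?_)
      exact (Nat.lt_two_pow_self (n := k)).le
    have hb : (5:ℤ)^i ∣ 16^(5^i) - 1 := (pow_dvd_pow 5 (Nat.le_succ i)).trans (L1 i)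
    have : (5:ℤ)^(2^k) - 1 + 16^(5^i) = 5^(2^k) + (16^(5^i) - 1) := by ring
    rw [this]; exact dvd_add ha hb
  have := hcop.mul_dvd h2 h5
  rw [show (10:ℤ)^i = 2^i * 5^i by rw [← mul_pow]; norm_num]
  have he : (5:ℤ)^(2^k) - (1 - 16^(5^i)) = 5^(2^k) - 1 + 16^(5^i) := by ring
  rw [he]; exact this

lemma Z1 (i k : ℕ) (h : i ≤ k) : (16 : ZMod (10^i))^(5^k) = 16^(5^i) := by
  have hd := D1 i k h
  have h0 : (((16:ℤ)^(5^k) - 16^(5^i) : ℤ) : ZMod (10^i)) = 0 := by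
    rw [ZMod.intCast_zmod_eq_zero_iff_dvd]
    exact_mod_cast hd
  push_cast at h0
  linear_combination h0

lemma Zidem (i : ℕ) : (16 : ZMod (10^i))^(5^i) * 16^(5^i) = 16^(5^i) := by
  have hd := Didem i
  have h0 : (((16:ℤ)^(5^i) * 16^(5^i) - 16^(5^i) : ℤ) : ZMod (10^i)) = 0 := by
    rw [ZMod.intCast_zmod_eq_zero_iff_dvd]
    exact_mod_cast hd
  push_cast at h0
  linear_combination h0

lemma Z2 (i k : ℕ) (h : i ≤ k) : (5 : ZMod (10^i))^(2^k) = 1 - 16^(5^i) := by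
  have hd := D2 i k h
  have h0 : (((5:ℤ)^(2^k) - (1 - 16^(5^i)) : ℤ) : ZMod (10^i)) = 0 := by
    rw [ZMod.intCast_zmod_eq_zero_iff_dvd]
    exact_mod_cast hd
  push_cast at h0
  linear_combination h0

instance (m : ℕ) : DiscreteTopology (ZMod m) := ⟨rfl⟩

def e10 : AdicInt 10 := ⟨fun i => (16 : ZMod (10^i))^(5^i), by
  intro i
  show (ZMod.castHom _ (ZMod (10^i))) ((16 : ZMod (10^(i+1)))^(5^(i+1))) = _
  rw [map_pow, map_ofNat, Z1 i (i+1) (Nat.le_succ i)]⟩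

lemma coordPow16 (k i : ℕ) : (((16 : AdicInt 10) ^ 5 ^ k : AdicInt 10) : ∀ j, ZMod (10^j)) i
    = (16 : ZMod (10^i)) ^ 5 ^ k := by
  have h : (((16 : AdicInt 10) ^ 5 ^ k : AdicInt 10) : ∀ j, ZMod (10^j)) i
      = ((Pi.evalRingHom (fun j => ZMod (10^j)) i).comp
          (SubringClass.subtype (adicSubring 10))) ((16 : AdicInt 10) ^ 5 ^ k) := rfl
  rw [h, map_pow, map_ofNat]

lemma coordPow5 (k i : ℕ) : (((5 : AdicInt 10) ^ 2 ^ k : AdicInt 10) : ∀ j, ZMod (10^j)) i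
    = (5 : ZMod (10^i)) ^ 2 ^ k := by
  have h : (((5 : AdicInt 10) ^ 2 ^ k : AdicInt 10) : ∀ j, ZMod (10^j)) i
      = ((Pi.evalRingHom (fun j => ZMod (10^j)) i).comp
          (SubringClass.subtype (adicSubring 10))) ((5 : AdicInt 10) ^ 2 ^ k) := rfl
  rw [h, map_pow, map_ofNat]

/-- `16^(5^k)` converges in `ℤ_10` to a nontrivial idempotent `e`, and
`5^(2^k)` converges to the complementary idempotent `1 - e`. -/
theorem adicInt_ten_idempotent_limits :
    ∃ e : AdicInt 10,
      Tendsto (fun k : ℕ => (16 : AdicInt 10) ^ 5 ^ k) atTop (nhds e) ∧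
      e * e = e ∧ e ≠ 0 ∧ e ≠ 1 ∧
      Tendsto (fun k : ℕ => (5 : AdicInt 10) ^ 2 ^ k) atTop (nhds (1 - e)) := by
  refine ⟨e10, ?_, ?_, ?_, ?_, ?_⟩
  · rw [tendsto_subtype_rng, tendsto_pi_nhds]
    intro i
    refine Tendsto.congr' ?_ tendsto_const_nhds
    filter_upwards [eventually_ge_atTop i] with k hk
    rw [coordPow16, Z1 i k hk]
    rfl
  · apply Subtype.ext
    funext i
    show ((e10 : ∀ j, ZMod (10^j)) * (e10 : ∀ j, ZMod (10^j))) i = _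
    exact Zidem i
  · intro h
    have := congrArg (fun x : AdicInt 10 => (x : ∀ j, ZMod (10^j)) 1) h
    simp only [e10] at this
    revert this
    decide
  · intro h
    have := congrArg (fun x : AdicInt 10 => (x : ∀ j, ZMod (10^j)) 1) h
    simp only [e10] at this
    revert this
    decide
  · rw [tendsto_subtype_rng, tendsto_pi_nhds]
    intro i
    refine Tendsto.congr' ?_ tendsto_const_nhds
    filter_upwards [eventually_ge_atTop i] with k hk
    rw [coordPow5, Z2 i k hk]
    show _ = ((1 - e10 : AdicInt 10) : ∀ j, ZMod (10^j)) i
    push_cast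
    simp [e10]
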